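/- Let (u_n)_{n≥1} be a subadditive sequence and define f : [1,∞) → ℝ by piecewise linear interpolation: f(t·n + (1−t)(n+1)) = t·u_n + (1−t)·u_{n+1} for t ∈ [0,1] and n ∈ ℕ. Then f is subadditive: f(x+y) ≤ f(x) + f(y) for all x, y ≥ 1. -/
import Mathlib


theorem interpolant_subadditive (u : ℕ → ℝ) (f : ℝ → ℝ)
    (hsub : ∀ m n, 1 ≤ m → 1 ≤ n → u (m + n) ≤ u m + u n)
    (hf : ∀ x : ℝ, 1 ≤ x → f x = u ⌊x⌋₊ + (x - ⌊x⌋₊) * (u (⌊x⌋₊ + 1) - u ⌊x⌋₊)) :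
    ∀ x y : ℝ, 1 ≤ x → 1 ≤ y → f (x + y) ≤ f x + f y := by
  intro x y hx hy
  set m := ⌊x⌋₊ with hmdef
  set n := ⌊y⌋₊ with hndef
  have hm1 : 1 ≤ m := Nat.le_floor (by exact_mod_cast hx)
  have hn1 : 1 ≤ n := Nat.le_floor (by exact_mod_cast hy)
  have hxm : (m : ℝ) ≤ x := Nat.floor_le (by linarith)
  have hyn : (n : ℝ) ≤ y := Nat.floor_le (by linarith)
  have hxm' : x < m + 1 := Nat.lt_floor_add_one x
  have hyn' : y < n + 1 := Nat.lt_floor_add_one y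
  have hxy1 : (1:ℝ) ≤ x + y := by linarith
  rw [hf x hx, hf y hy, hf (x + y) hxy1]
  have h1 := hsub m n hm1 hn1
  have h2 := hsub (m + 1) n (by omega) hn1
  rw [show m + 1 + n = m + n + 1 from by omega] at h2
  have h3 := hsub m (n + 1) hm1 (by omega)
  rw [show m + (n + 1) = m + n + 1 from by omega] at h3
  have h4 := hsub (m + 1) (n + 1) (by omega) (by omega)
  rw [show m + 1 + (n + 1) = m + n + 2 from by omega] at h4
  by_cases hc : x + y < m + n + 1
  · have hfl : ⌊x + y⌋₊ = m + n := by
      rw [Nat.floor_eq_iff (by linarith)]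
      constructor
      · push_cast; linarith
      · push_cast; linarith
    rw [hfl]
    have e1 : (m + n + 1 - (x + y)) * u (m + n) ≤ (m + n + 1 - (x + y)) * (u m + u n) :=
      mul_le_mul_of_nonneg_left h1 (by linarith)
    have e2 : (x - m) * u (m + n + 1) ≤ (x - m) * (u (m + 1) + u n) :=
      mul_le_mul_of_nonneg_left h2 (by linarith)
    have e3 : (y - n) * u (m + n + 1) ≤ (y - n) * (u m + u (n + 1)) :=
      mul_le_mul_of_nonneg_left h3 (by linarith)
    push_cast at e1 e2 e3 ⊢
    nlinarith [e1, e2, e3]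
  · have hfl : ⌊x + y⌋₊ = m + n + 1 := by
      rw [Nat.floor_eq_iff (by linarith)]
      constructor
      · push_cast; linarith
      · push_cast; linarith
    rw [hfl]
    have e1 : (m + 1 - x) * u (m + n + 1) ≤ (m + 1 - x) * (u m + u (n + 1)) :=
      mul_le_mul_of_nonneg_left h3 (by linarith)
    have e2 : (n + 1 - y) * u (m + n + 1) ≤ (n + 1 - y) * (u (m + 1) + u n) :=
      mul_le_mul_of_nonneg_left h2 (by linarith)
    have e3 : (x + y - (m + n + 1)) * u (m + n + 2) ≤ (x + y - (m + n + 1)) * (u (m + 1) + u (n + 1)) :=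
      mul_le_mul_of_nonneg_left h4 (by linarith)
    push_cast at e1 e2 e3 ⊢
    nlinarith [e1, e2, e3]
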